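/- arXiv:2310.02471 — 3 statements merged into one kernel-verified Lean document; each statement's English description precedes it below -/
import Mathlib

section
/- Let g be a nonzero finite-dimensional nilpotent real Lie algebra with a hypercomplex structure (I,J,K) whose Obata connection ∇ is flat and such that ∇_X is a nilpotent endomorphism of g for every X ∈ g. Then g_1^H = H[g,g] is a proper subspace of g. -/
open Submodule

section Hyper

variable {L : Type*} [LieRing L] [LieAlgebra ℝ L]

/-- A complex structure operator on a real Lie algebra: `I² = -id` and the integrability
identity `[IX,IY] = [X,Y] + I[IX,Y] + I[X,IY]` (equivalent to `g^{1,0}` being a subalgebra). -/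
def IsComplexStructureOp (I : L →ₗ[ℝ] L) : Prop :=
  (∀ x, I (I x) = -x) ∧ ∀ x y : L, ⁅I x, I y⁆ = ⁅x, y⁆ + I ⁅I x, y⁆ + I ⁅x, I y⁆

/-- A hypercomplex structure: a triple of complex structure operators with `IJ = K`
(together with `I² = J² = K² = -id` this gives the quaternionic relations). -/
structure IsHypercomplex (I J K : L →ₗ[ℝ] L) : Prop where
  hI : IsComplexStructureOp I
  hJ : IsComplexStructureOp J
  hK : IsComplexStructureOp K
  hIJ : ∀ x, I (J x) = K x

/-- The Obata connection `∇_X` as an endomorphism of `L`: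
`∇_X Y = ½([X,Y] + I[IX,Y] − J[X,JY] + K[IX,JY])`. -/
noncomputable def obataOp (I J K : L →ₗ[ℝ] L) (X : L) : Module.End ℝ L :=
  (1/2 : ℝ) • (LieAlgebra.ad ℝ L X + I ∘ₗ LieAlgebra.ad ℝ L (I X)
    - J ∘ₗ LieAlgebra.ad ℝ L X ∘ₗ J + K ∘ₗ LieAlgebra.ad ℝ L (I X) ∘ₗ J)

/-- Flatness of the Obata connection. -/
def ObataFlat (I J K : L →ₗ[ℝ] L) : Prop :=
  ∀ X Y Z : L, obataOp I J K X (obataOp I J K Y Z) - obataOp I J K Y (obataOp I J K X Z)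
    = obataOp I J K ⁅X, Y⁆ Z

/-- The set of brackets of elements of a subspace `W`. -/
def bracketSet (W : Submodule ℝ L) : Set L := {z : L | ∃ x ∈ W, ∃ y ∈ W, z = ⁅x, y⁆}

/-- `H[W,W] = span([W,W] ∪ I[W,W] ∪ J[W,W] ∪ K[W,W])`. -/
def Hbr (I J K : L →ₗ[ℝ] L) (W : Submodule ℝ L) : Submodule ℝ L :=
  span ℝ (bracketSet W ∪ I '' bracketSet W ∪ J '' bracketSet W ∪ K '' bracketSet W)

/-- The descending series `g_0^H = g`, `g_i^H = H[g_{i-1}^H, g_{i-1}^H]`. -/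
def gH (I J K : L →ₗ[ℝ] L) : ℕ → Submodule ℝ L
  | 0 => ⊤
  | i + 1 => Hbr I J K (gH I J K i)

variable {I J K : L →ₗ[ℝ] L} (h : IsHypercomplex I J K)

lemma obata_apply (X Y : L) :
    obataOp I J K X Y = (1/2:ℝ) • (⁅X,Y⁆ + I ⁅I X, Y⁆ - J ⁅X, J Y⁆ + K ⁅I X, J Y⁆) := by
  simp [obataOp, LieAlgebra.ad_apply]

lemma obata_add_left (X X' Y : L) :
    obataOp I J K (X + X') Y = obataOp I J K X Y + obataOp I J K X' Y := by
  simp only [obata_apply, map_add, add_lie, lie_add]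
  module

lemma obata_smul_left (t : ℝ) (X Y : L) :
    obataOp I J K (t • X) Y = t • obataOp I J K X Y := by
  simp only [obata_apply, map_smul, smul_lie, lie_smul]
  module

include h

lemma q_JIJ (x : L) : J (I (J x)) = I x := by
  have h1 : I (J (I (J x))) = - x := by rw [h.hIJ, h.hIJ, h.hK.1]
  have h2 := congrArg I h1
  rw [h.hI.1, map_neg] at h2
  simpa using congrArg Neg.neg h2

lemma q_JI (x : L) : J (I x) = - K x := by
  have hx : I x = - I (J (J x)) := by rw [h.hJ.1]; simp
  rw [hx, map_neg, q_JIJ h, h.hIJ]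

lemma q_IK (x : L) : I (K x) = - J x := by rw [← h.hIJ, h.hI.1]

lemma q_KI (x : L) : K (I x) = J x := by
  rw [← h.hIJ, q_JI h, map_neg, q_IK h]; simp

lemma q_KJ (x : L) : K (J x) = - I x := by rw [← h.hIJ, h.hJ.1]; simp

lemma q_JK (x : L) : J (K x) = I x := by rw [← h.hIJ, q_JIJ h]

lemma obata_torsion (X Y : L) :
    obataOp I J K X Y - obataOp I J K Y X = ⁅X, Y⁆ := by
  rw [obata_apply, obata_apply]
  have c_eq := h.hI.2 X Y
  have d_eq := h.hJ.2 X Y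
  have k1 := h.hK.2 (J X) (I Y)
  rw [q_KJ h, q_KI h] at k1
  simp only [neg_lie, map_neg] at k1
  have k1K := congrArg K k1
  simp only [map_add, map_neg, map_sub, h.hK.1] at k1K
  have sa : ⁅Y, X⁆ = -⁅X, Y⁆ := by rw [lie_skew]
  have sI : I ⁅I Y, X⁆ = -(I ⁅X, I Y⁆) := by rw [← map_neg, lie_skew]
  have sJ : J ⁅Y, J X⁆ = -(J ⁅J X, Y⁆) := by rw [← map_neg, lie_skew]
  have sK : K ⁅J X, I Y⁆ = -(K ⁅I Y, J X⁆) := by rw [← map_neg, lie_skew]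
  linear_combination (norm := module) (-(1/2:ℝ)) • sa + (-(1/2:ℝ)) • sI + (1/2:ℝ) • sJ
    + (-(1/2:ℝ)) • c_eq + (1/2:ℝ) • d_eq + (-(1/2:ℝ)) • k1K + (-(1/2:ℝ)) • sK

lemma obata_I (X Y : L) : obataOp I J K X (I Y) = I (obataOp I J K X Y) := by
  rw [obata_apply, obata_apply, map_smul, q_JI h Y]
  simp only [map_add, map_sub, map_neg, lie_neg, neg_lie, h.hI.1, h.hIJ, q_IK h]
  have E1I := congrArg I (h.hI.2 X Y)
  simp only [map_add, h.hI.1] at E1I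
  have E2 := h.hJ.2 (J X) (K Y)
  rw [h.hJ.1, q_JK h] at E2
  simp only [neg_lie, map_neg] at E2
  have E3 := h.hJ.2 (I X) Y
  rw [q_JI h] at E3
  simp only [neg_lie, map_neg] at E3
  have E4 := h.hK.2 X (I Y)
  rw [q_KI h] at E4
  have E5 := h.hK.2 (I X) Y
  rw [q_KI h] at E5
  have E6 := congrArg J (h.hI.2 (K X) Y)
  rw [q_IK h] at E6
  simp only [map_add, map_neg, neg_lie, q_JI h] at E6
  linear_combination (norm := module) (1/2:ℝ) • E1I + (1/2:ℝ) • E2 + (-(1/2:ℝ)) • E3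
    + (-(1/2:ℝ)) • E4 + (1/2:ℝ) • E5 + (-(1/2:ℝ)) • E6

lemma obata_J (X Y : L) : obataOp I J K X (J Y) = J (obataOp I J K X Y) := by
  rw [obata_apply, obata_apply, map_smul, h.hJ.1 Y]
  simp only [map_add, map_sub, map_neg, lie_neg, q_JI h, h.hJ.1, q_JK h]
  module

lemma obata_K (X Y : L) : obataOp I J K X (K Y) = K (obataOp I J K X Y) := by
  rw [← h.hIJ Y, obata_I h, obata_J h, h.hIJ]

end Hyper

/-- Type synonym for `L` regarded as a Lie module over itself via the Obata connection. -/
def ObataMod (L : Type*) := L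

/-- for a nonzero finite-dimensional nilpotent hypercomplex real Lie algebra
with flat Obata connection and each `∇_X` nilpotent, `g_1^H = H[g,g]` is a proper subspace. -/
theorem gH_one_proper {L : Type*} [LieRing L] [LieAlgebra ℝ L] [Nontrivial L]
    [FiniteDimensional ℝ L] [LieRing.IsNilpotent L]
    (I J K : L →ₗ[ℝ] L) (h : IsHypercomplex I J K)
    (hflat : ObataFlat I J K)
    (hnil : ∀ X : L, IsNilpotent (obataOp I J K X)) :
    Hbr I J K ⊤ < ⊤ := by
  letI : AddCommGroup (ObataMod L) := inferInstanceAs (AddCommGroup L)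
  letI : Module ℝ (ObataMod L) := inferInstanceAs (Module ℝ L)
  letI : LieRingModule L (ObataMod L) :=
    { bracket := fun x m => obataOp I J K x m
      add_lie := fun x y m => obata_add_left x y m
      lie_add := fun x m n => map_add (obataOp I J K x) m n
      leibniz_lie := fun x y m => by
        have := hflat x y m
        change obataOp I J K x (obataOp I J K y m)
          = obataOp I J K ⁅x, y⁆ m + obataOp I J K y (obataOp I J K x m)
        rw [← this]; abel }
  letI : LieModule ℝ L (ObataMod L) :=
    { smul_lie := fun t x m => obata_smul_left t x m
      lie_smul := fun t x m => map_smul (obataOp I J K x) t m }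
  haveI : Nontrivial (ObataMod L) := inferInstanceAs (Nontrivial L)
  haveI : LieModule.IsNilpotent L (ObataMod L) := by
    refine LieAlgebra.isEngelian_of_isNoetherian (R := ℝ) (L := L) (ObataMod L) fun x => ?_
    exact hnil x
  obtain ⟨n, hn⟩ := LieModule.IsNilpotent.nilpotent (R := ℝ) (L := L) (M := ObataMod L)
  -- The submodule spanned by the image of the Obata connection
  set T : LieSubmodule ℝ L (ObataMod L) := ⁅(⊤ : LieIdeal ℝ L), (⊤ : LieSubmodule ℝ L (ObataMod L))⁆
    with hT
  have hTne : T ≠ ⊤ := by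
    intro htop
    have hall : ∀ k, LieModule.lowerCentralSeries ℝ L (ObataMod L) k = ⊤ := by
      intro k
      induction k with
      | zero => simp
      | succ k ih => rw [LieModule.lowerCentralSeries_succ, ih, ← hT, htop]
    have := (hall n).symm.trans hn
    exact absurd this (by simp)
  have hTsub : (T : Submodule ℝ (ObataMod L)) ≠ ⊤ := fun hc =>
    hTne ((LieSubmodule.toSubmodule_eq_top (N := T)).mp hc)
  set S : Submodule ℝ L := (T : Submodule ℝ (ObataMod L)) with hS
  have hmem : ∀ x y : L, obataOp I J K x y ∈ S := by
    intro x y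
    have : (obataOp I J K x y : ObataMod L) ∈ (T : Submodule ℝ (ObataMod L)) := by
      rw [LieSubmodule.lieIdeal_oper_eq_linear_span']
      exact Submodule.subset_span ⟨x, trivial, y, trivial, rfl⟩
    exact this
  have hbrmem : ∀ x y : L, ⁅x, y⁆ ∈ S := by
    intro x y
    have := obata_torsion h x y
    rw [← this]
    exact sub_mem (hmem x y) (hmem y x)
  have hle : Hbr I J K ⊤ ≤ S := by
    rw [Hbr, Submodule.span_le]
    rintro z (((⟨x, -, y, -, rfl⟩ | ⟨w, ⟨x, -, y, -, rfl⟩, rfl⟩) | ⟨w, ⟨x, -, y, -, rfl⟩, rfl⟩)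
      | ⟨w, ⟨x, -, y, -, rfl⟩, rfl⟩)
    · exact hbrmem x y
    · rw [← obata_torsion h x y, map_sub, ← obata_I h, ← obata_I h]
      exact sub_mem (hmem x (I y)) (hmem y (I x))
    · rw [← obata_torsion h x y, map_sub, ← obata_J h, ← obata_J h]
      exact sub_mem (hmem x (J y)) (hmem y (J x))
    · rw [← obata_torsion h x y, map_sub, ← obata_K h, ← obata_K h]
      exact sub_mem (hmem x (K y)) (hmem y (K x))
  rw [lt_top_iff_ne_top]
  intro htop
  exact hTsub (top_le_iff.mp (htop ▸ hle))
end

section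
/- Let g be a finite-dimensional nilpotent real Lie algebra with a hypercomplex structure (I,J,K) whose Obata connection ∇ is flat and such that ∇_X is a nilpotent endomorphism of g for every X ∈ g. Then for every i ≥ 0, if g_i^H ≠ 0 then g_{i+1}^H is a proper subspace of g_i^H. -/
open Submodule

attribute [local instance] LieRing.ofAssociativeRing

section Aux

variable {L : Type*} [LieRing L] [LieAlgebra ℝ L] {I J K : L →ₗ[ℝ] L}

namespace IsHypercomplex

lemma iI (h : IsHypercomplex I J K) (z : L) : I (I z) = -z := h.hI.1 z
lemma jJ (h : IsHypercomplex I J K) (z : L) : J (J z) = -z := h.hJ.1 z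
lemma kK (h : IsHypercomplex I J K) (z : L) : K (K z) = -z := h.hK.1 z
lemma iJ (h : IsHypercomplex I J K) (z : L) : I (J z) = K z := h.hIJ z

lemma iK (h : IsHypercomplex I J K) (z : L) : I (K z) = -(J z) := by
  rw [← h.iJ z, h.iI]

lemma jIJ (h : IsHypercomplex I J K) (z : L) : J (I (J z)) = I z := by
  have h1 : I (J (I (J z))) = -z := by rw [h.iJ, h.iJ, h.kK]
  have h2 := congrArg I h1
  rw [h.iI, map_neg] at h2
  exact neg_injective h2

lemma jI (h : IsHypercomplex I J K) (z : L) : J (I z) = -(K z) := by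
  have h1 := h.jIJ (-(J z))
  simp only [map_neg, h.jJ, neg_neg, h.iJ] at h1
  exact h1

lemma jK (h : IsHypercomplex I J K) (z : L) : J (K z) = I z := by
  rw [← h.iJ, h.jIJ]

lemma kI (h : IsHypercomplex I J K) (z : L) : K (I z) = J z := by
  rw [← h.iJ (I z), h.jI, map_neg, h.iK, neg_neg]

lemma kJ (h : IsHypercomplex I J K) (z : L) : K (J z) = -(I z) := by
  rw [← h.iJ (J z), h.jJ, map_neg]

end IsHypercomplex

lemma obataOp_apply (I J K : L →ₗ[ℝ] L) (X Z : L) :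
    obataOp I J K X Z
      = (1/2 : ℝ) • (⁅X, Z⁆ + I ⁅I X, Z⁆ - J ⁅X, J Z⁆ + K ⁅I X, J Z⁆) := rfl

namespace IsHypercomplex

lemma obata_I (h : IsHypercomplex I J K) (X Y : L) :
    obataOp I J K X (I Y) = I (obataOp I J K X Y) := by
  have h1 := h.hI.2 X (I Y)
  have h2 := h.hI.2 (J X) (K Y)
  have h3 := h.hJ.2 (I X) Y
  have h4 := h.hK.2 (I X) Y
  have h5 := congrArg I (h.hJ.2 X Y)
  have h6 := congrArg I (h.hK.2 X Y)
  rw [obataOp_apply, obataOp_apply]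
  simp only [map_add, map_sub, map_neg, map_smul, h.iI, h.iJ, h.iK, h.jI, h.jJ, h.jK,
    h.kI, h.kJ, h.kK, lie_neg, neg_lie, neg_neg, smul_neg] at h1 h2 h3 h4 h5 h6 ⊢
  linear_combination (norm := module) (2:ℝ)⁻¹ • (-h1 + h2 - h3 + h4 - h5 + h6)

lemma obata_J (h : IsHypercomplex I J K) (X Y : L) :
    obataOp I J K X (J Y) = J (obataOp I J K X Y) := by
  rw [obataOp_apply, obataOp_apply]
  simp only [map_add, map_sub, map_neg, map_smul, h.iI, h.iJ, h.iK, h.jI, h.jJ, h.jK,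
    h.kI, h.kJ, h.kK, lie_neg, neg_lie, neg_neg, smul_neg]
  module

lemma obata_K (h : IsHypercomplex I J K) (X Y : L) :
    obataOp I J K X (K Y) = K (obataOp I J K X Y) := by
  rw [← h.iJ Y, h.obata_I X (J Y), h.obata_J X Y, h.iJ]

lemma obata_torsion (h : IsHypercomplex I J K) (X Y : L) :
    obataOp I J K X Y - obataOp I J K Y X = ⁅X, Y⁆ := by
  have h1 := h.hI.2 X Y
  have h2 := h.hJ.2 X Y
  have h3 := h.hK.2 (I X) (I Y)
  have e1 : ⁅Y, X⁆ = -⁅X, Y⁆ := (lie_skew Y X).symm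
  have e2 : ⁅I Y, X⁆ = -⁅X, I Y⁆ := (lie_skew (I Y) X).symm
  have e3 : ⁅Y, J X⁆ = -⁅J X, Y⁆ := (lie_skew Y (J X)).symm
  have e4 : ⁅I Y, J X⁆ = -⁅J X, I Y⁆ := (lie_skew (I Y) (J X)).symm
  rw [obataOp_apply, obataOp_apply]
  simp only [map_add, map_sub, map_neg, map_smul, h.iI, h.iJ, h.iK, h.jI, h.jJ, h.jK,
    h.kI, h.kJ, h.kK, lie_neg, neg_lie, neg_neg, smul_neg, e1, e2, e3, e4] at h1 h2 h3 ⊢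
  linear_combination (norm := module) (2:ℝ)⁻¹ • (-h1 + h2 - h3)

end IsHypercomplex

/-- The Obata connection as a morphism of Lie algebras `L → End(L)` (using flatness). -/
noncomputable def obataHom (I J K : L →ₗ[ℝ] L) (hflat : ObataFlat I J K) :
    L →ₗ⁅ℝ⁆ Module.End ℝ L where
  toFun := obataOp I J K
  map_add' X Y := by
    ext z
    simp only [obataOp_apply, LinearMap.add_apply, map_add, add_lie]
    module
  map_smul' c X := by
    ext z
    simp only [obataOp_apply, LinearMap.smul_apply, map_smul, smul_lie, RingHom.id_apply]
    module
  map_lie' {X Y} := by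
    ext z
    simp only [Ring.lie_def, LinearMap.sub_apply, Module.End.mul_apply]
    exact (hflat X Y z).symm

lemma bracketSet_mono {W1 W2 : Submodule ℝ L} (hw : W1 ≤ W2) :
    bracketSet W1 ⊆ bracketSet W2 := by
  rintro z ⟨x, hx, y, hy, rfl⟩
  exact ⟨x, hw hx, y, hw hy, rfl⟩

lemma Hbr_mono (I J K : L →ₗ[ℝ] L) {W1 W2 : Submodule ℝ L} (hw : W1 ≤ W2) :
    Hbr I J K W1 ≤ Hbr I J K W2 :=
  span_mono (Set.union_subset_union (Set.union_subset_union (Set.union_subset_union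
    (bracketSet_mono hw) (Set.image_mono (bracketSet_mono hw)))
    (Set.image_mono (bracketSet_mono hw))) (Set.image_mono (bracketSet_mono hw)))

lemma gH_succ_le (I J K : L →ₗ[ℝ] L) : ∀ i, gH I J K (i+1) ≤ gH I J K i
  | 0 => le_top
  | (i+1) => Hbr_mono I J K (gH_succ_le I J K i)

namespace IsHypercomplex

lemma Hbr_inv (h : IsHypercomplex I J K) (W : Submodule ℝ L) :
    Hbr I J K W ≤ ((Hbr I J K W).comap I ⊓ (Hbr I J K W).comap J) ⊓ (Hbr I J K W).comap K := by
  apply span_le.mpr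
  have m0 : ∀ b ∈ bracketSet W, b ∈ Hbr I J K W :=
    fun b hb => subset_span (Or.inl (Or.inl (Or.inl hb)))
  have m1 : ∀ b ∈ bracketSet W, I b ∈ Hbr I J K W :=
    fun b hb => subset_span (Or.inl (Or.inl (Or.inr ⟨b, hb, rfl⟩)))
  have m2 : ∀ b ∈ bracketSet W, J b ∈ Hbr I J K W :=
    fun b hb => subset_span (Or.inl (Or.inr ⟨b, hb, rfl⟩))
  have m3 : ∀ b ∈ bracketSet W, K b ∈ Hbr I J K W :=
    fun b hb => subset_span (Or.inr ⟨b, hb, rfl⟩)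
  rintro g (((hb | ⟨b, hb, rfl⟩) | ⟨b, hb, rfl⟩) | ⟨b, hb, rfl⟩) <;>
      simp only [SetLike.mem_coe, Submodule.mem_inf, Submodule.mem_comap]
  · exact ⟨⟨m1 _ hb, m2 _ hb⟩, m3 _ hb⟩
  · exact ⟨⟨by rw [h.iI]; exact neg_mem (m0 _ hb), by rw [h.jI]; exact neg_mem (m3 _ hb)⟩,
      by rw [h.kI]; exact m2 _ hb⟩
  · exact ⟨⟨by rw [h.iJ]; exact m3 _ hb, by rw [h.jJ]; exact neg_mem (m0 _ hb)⟩,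
      by rw [h.kJ]; exact neg_mem (m1 _ hb)⟩
  · exact ⟨⟨by rw [h.iK]; exact neg_mem (m2 _ hb), by rw [h.jK]; exact m1 _ hb⟩,
      by rw [h.kK]; exact neg_mem (m0 _ hb)⟩

end IsHypercomplex

end Aux

/-- under the same hypotheses, each nonzero `g_i^H` strictly contains
`g_{i+1}^H`. -/
theorem gH_strict_descent {L : Type*} [LieRing L] [LieAlgebra ℝ L]
    [FiniteDimensional ℝ L] [LieRing.IsNilpotent L]
    (I J K : L →ₗ[ℝ] L) (h : IsHypercomplex I J K)
    (hflat : ObataFlat I J K)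
    (hnil : ∀ X : L, IsNilpotent (obataOp I J K X)) :
    ∀ i : ℕ, gH I J K i ≠ ⊥ → gH I J K (i + 1) < gH I J K i := by
  classical
  -- the range of the Obata connection, a Lie subalgebra of endomorphisms
  set ρ := obataHom I J K hflat with hρ
  set A := ρ.range with hA
  have hnilA : ∀ a : A, IsNilpotent (LieModule.toEnd ℝ A L a) := by
    rintro ⟨a, ha⟩
    obtain ⟨X, hX⟩ := (LieHom.mem_range (f := ρ) a).mp ha
    have he : LieModule.toEnd ℝ A L ⟨a, ha⟩ = a := by
      rw [LieSubalgebra.toEnd_eq, LieModule.toEnd_module_end]; rfl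
    rw [he, ← hX]
    exact hnil X
  have hEng : LieModule.IsNilpotent A L :=
    LieAlgebra.isEngelian_of_isNoetherian L hnilA
  obtain ⟨k0, hk0⟩ := (LieModule.isNilpotent_iff ℝ A L).mp hEng
  intro i hne
  refine lt_of_le_of_ne (gH_succ_le I J K i) (fun heq => hne ?_)
  have hfix : Hbr I J K (gH I J K i) = gH I J K i := heq
  set W := gH I J K i with hW
  -- invariance of W under I, J, K
  have hinv := h.Hbr_inv W
  rw [hfix] at hinv
  have hWI : ∀ x ∈ W, I x ∈ W := fun x hx => (hinv hx).1.1
  have hWJ : ∀ x ∈ W, J x ∈ W := fun x hx => (hinv hx).1.2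
  have hWK : ∀ x ∈ W, K x ∈ W := fun x hx => (hinv hx).2
  -- W is contained in every term of the lower central series of L as an A-module
  have key : ∀ k, ∀ x ∈ W, x ∈ LieModule.lowerCentralSeries ℝ A L k := by
    intro k
    induction k with
    | zero => intro x _; simp
    | succ k ih =>
      -- any value of the connection on W lands in the next term
      have hD : ∀ a : L, ∀ b ∈ W, obataOp I J K a b ∈ LieModule.lowerCentralSeries ℝ A L (k+1) := by
        intro a b hb
        have hmem : obataOp I J K a ∈ A := ⟨a, rfl⟩
        have : obataOp I J K a b = ⁅(⟨obataOp I J K a, hmem⟩ : A), b⁆ := rfl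
        rw [this, LieModule.lowerCentralSeries_succ]
        exact LieSubmodule.lie_mem_lie trivial (ih b hb)
      intro x hx
      rw [← hfix] at hx
      have hgen : Hbr I J K W ≤
          (LieModule.lowerCentralSeries ℝ A L (k+1) : LieSubmodule ℝ A L).toSubmodule := by
        apply span_le.mpr
        have core : ∀ (P : L →ₗ[ℝ] L), (∀ x ∈ W, P x ∈ W) →
            (∀ X Y : L, obataOp I J K X (P Y) = P (obataOp I J K X Y)) →
            ∀ b ∈ bracketSet W,
            P b ∈ (LieModule.lowerCentralSeries ℝ A L (k+1) : LieSubmodule ℝ A L).toSubmodule := by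
          rintro P hPW hP b ⟨u, hu, v, hv, rfl⟩
          have hPb : P ⁅u, v⁆ = obataOp I J K u (P v) - obataOp I J K v (P u) := by
            rw [← h.obata_torsion u v, map_sub, hP, hP]
          rw [hPb]
          exact sub_mem ((LieSubmodule.mem_toSubmodule _).mpr (hD u (P v) (hPW v hv)))
            ((LieSubmodule.mem_toSubmodule _).mpr (hD v (P u) (hPW u hu)))
        have hid := core LinearMap.id (fun x hx => hx) (fun X Y => rfl)
        have hi := core I hWI h.obata_I
        have hj := core J hWJ h.obata_J
        have hk := core K hWK h.obata_K
        rintro g (((hb | ⟨b, hb, rfl⟩) | ⟨b, hb, rfl⟩) | ⟨b, hb, rfl⟩)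
        · exact hid g hb
        · exact hi b hb
        · exact hj b hb
        · exact hk b hb
      exact hgen hx
  -- conclude W = ⊥, contradiction
  apply (Submodule.eq_bot_iff _).mpr
  intro x hx
  have := key k0 x hx
  rw [hk0] at this
  exact (LieSubmodule.mem_bot _).mp this
end

section
/- Let g be a real Lie algebra with a hypercomplex structure (I,J,K). Then for every i ≥ 0 the subspace g_i^H is a Lie subalgebra of g which is invariant under I, J, and K. -/
open Submodule

section Aux

variable {L : Type*} [LieRing L] [LieAlgebra ℝ L] {I J K : L →ₗ[ℝ] L}

lemma quat_IK (h : IsHypercomplex I J K) (x : L) : I (K x) = -(J x) := by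
  rw [← h.hIJ x, h.hI.1]

lemma quat_JIJ (h : IsHypercomplex I J K) (x : L) : J (I (J x)) = I x := by
  have h1 : I (J (I (J x))) = -x := by rw [h.hIJ, h.hIJ]; exact h.hK.1 x
  have h2 := congrArg I h1
  rw [h.hI.1] at h2
  have := congrArg Neg.neg h2
  simpa using this

lemma quat_JI (h : IsHypercomplex I J K) (x : L) : J (I x) = -(K x) := by
  have hx : x = -(J (J x)) := by rw [h.hJ.1, neg_neg]
  calc J (I x) = J (I (-(J (J x)))) := by rw [← hx]
    _ = -(J (I (J (J x)))) := by rw [map_neg, map_neg]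
    _ = -(I (J x)) := by rw [quat_JIJ h]
    _ = -(K x) := by rw [h.hIJ]

lemma quat_JK (h : IsHypercomplex I J K) (x : L) : J (K x) = I x := by
  rw [← h.hIJ x]; exact quat_JIJ h x

lemma quat_KI (h : IsHypercomplex I J K) (x : L) : K (I x) = J x := by
  have : I (J (I x)) = I (-(K x)) := congrArg I (quat_JI h x)
  rw [map_neg, quat_IK h] at this
  rw [← h.hIJ]; simpa using this

lemma quat_KJ (h : IsHypercomplex I J K) (x : L) : K (J x) = -(I x) := by
  rw [← h.hIJ, h.hJ.1, map_neg]

lemma mem_Hbr_br {W : Submodule ℝ L} {b : L} (hb : b ∈ bracketSet W) :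
    b ∈ Hbr I J K W := subset_span (Or.inl (Or.inl (Or.inl hb)))

lemma mem_Hbr_I {W : Submodule ℝ L} {b : L} (hb : b ∈ bracketSet W) :
    I b ∈ Hbr I J K W := subset_span (Or.inl (Or.inl (Or.inr ⟨b, hb, rfl⟩)))

lemma mem_Hbr_J {W : Submodule ℝ L} {b : L} (hb : b ∈ bracketSet W) :
    J b ∈ Hbr I J K W := subset_span (Or.inl (Or.inr ⟨b, hb, rfl⟩))

lemma mem_Hbr_K {W : Submodule ℝ L} {b : L} (hb : b ∈ bracketSet W) :
    K b ∈ Hbr I J K W := subset_span (Or.inr ⟨b, hb, rfl⟩)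

lemma Hbr_map_le (h : IsHypercomplex I J K) (W : Submodule ℝ L)
    {T : L →ₗ[ℝ] L}
    (hT : ∀ b ∈ bracketSet W, T b ∈ Hbr I J K W ∧ T (I b) ∈ Hbr I J K W ∧
      T (J b) ∈ Hbr I J K W ∧ T (K b) ∈ Hbr I J K W) :
    ∀ y ∈ Hbr I J K W, T y ∈ Hbr I J K W := by
  intro y hy
  have hle : Hbr I J K W ≤ (Hbr I J K W).comap T := by
    rw [Hbr, span_le]
    rintro s (((hs | ⟨b, hb, rfl⟩) | ⟨b, hb, rfl⟩) | ⟨b, hb, rfl⟩)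
    · exact (hT s hs).1
    · exact (hT b hb).2.1
    · exact (hT b hb).2.2.1
    · exact (hT b hb).2.2.2
  exact hle hy

lemma Hbr_I_inv (h : IsHypercomplex I J K) (W : Submodule ℝ L) :
    ∀ y ∈ Hbr I J K W, I y ∈ Hbr I J K W := by
  apply Hbr_map_le h
  intro b hb
  refine ⟨mem_Hbr_I hb, ?_, ?_, ?_⟩
  · rw [h.hI.1]; exact neg_mem (mem_Hbr_br hb)
  · rw [h.hIJ]; exact mem_Hbr_K hb
  · rw [quat_IK h]; exact neg_mem (mem_Hbr_J hb)

lemma Hbr_J_inv (h : IsHypercomplex I J K) (W : Submodule ℝ L) :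
    ∀ y ∈ Hbr I J K W, J y ∈ Hbr I J K W := by
  apply Hbr_map_le h
  intro b hb
  refine ⟨mem_Hbr_J hb, ?_, ?_, ?_⟩
  · rw [quat_JI h]; exact neg_mem (mem_Hbr_K hb)
  · rw [h.hJ.1]; exact neg_mem (mem_Hbr_br hb)
  · rw [quat_JK h]; exact mem_Hbr_I hb

lemma Hbr_K_inv (h : IsHypercomplex I J K) (W : Submodule ℝ L) :
    ∀ y ∈ Hbr I J K W, K y ∈ Hbr I J K W := by
  apply Hbr_map_le h
  intro b hb
  refine ⟨mem_Hbr_K hb, ?_, ?_, ?_⟩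
  · rw [quat_KI h]; exact mem_Hbr_J hb
  · rw [quat_KJ h]; exact neg_mem (mem_Hbr_I hb)
  · rw [h.hK.1]; exact neg_mem (mem_Hbr_br hb)

lemma Hbr_le (I J K : L →ₗ[ℝ] L) {W : Submodule ℝ L}
    (hbr : ∀ x ∈ W, ∀ y ∈ W, ⁅x, y⁆ ∈ W)
    (hI : ∀ y ∈ W, I y ∈ W) (hJ : ∀ y ∈ W, J y ∈ W) (hK : ∀ y ∈ W, K y ∈ W) :
    Hbr I J K W ≤ W := by
  rw [Hbr, span_le]
  have hb : bracketSet W ⊆ (W : Set L) := by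
    rintro s ⟨x, hx, y, hy, rfl⟩; exact hbr x hx y hy
  rintro s (((hs | ⟨b, hb', rfl⟩) | ⟨b, hb', rfl⟩) | ⟨b, hb', rfl⟩)
  · exact hb hs
  · exact hI b (hb hb')
  · exact hJ b (hb hb')
  · exact hK b (hb hb')

end Aux


/-- each `g_i^H` is a Lie subalgebra of `g`, invariant under `I`, `J`, `K`. -/
theorem gH_subalgebra_invariant {L : Type*} [LieRing L] [LieAlgebra ℝ L]
    (I J K : L →ₗ[ℝ] L) (h : IsHypercomplex I J K) :
    ∀ i : ℕ,
      (∀ x ∈ gH I J K i, ∀ y ∈ gH I J K i, ⁅x, y⁆ ∈ gH I J K i) ∧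
      (∀ y ∈ gH I J K i, I y ∈ gH I J K i) ∧
      (∀ y ∈ gH I J K i, J y ∈ gH I J K i) ∧
      (∀ y ∈ gH I J K i, K y ∈ gH I J K i) := by
  intro i
  induction i with
  | zero =>
    refine ⟨fun x _ y _ => trivial, fun y _ => trivial, fun y _ => trivial, fun y _ => trivial⟩
  | succ n ih =>
    obtain ⟨ihbr, ihI, ihJ, ihK⟩ := ih
    have hle : gH I J K (n + 1) ≤ gH I J K n := Hbr_le I J K ihbr ihI ihJ ihK
    refine ⟨?_, Hbr_I_inv h _, Hbr_J_inv h _, Hbr_K_inv h _⟩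
    intro x hx y hy
    exact mem_Hbr_br ⟨x, hle hx, y, hle hy, rfl⟩
end
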